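/- Let ω be a smooth closed 2-form on a neighborhood of 0 in ℝ^{2n}, let ω_c denote the constant 2-form equal to ω(0), let A be a real (2n)×(2n) matrix with linear vector field S(x) = Ax, and assume L_S ω = ω and L_S ω_c = ω_c. Define the 1-form ζ = i_S(ω − ω_c), i.e. ζ_x = (ω − ω_c)_x(Ax, ·), and for t ∈ [0,1] set ω_t = tω + (1−t)ω_c; assume each ω_t is nondegenerate on the neighborhood, and let Y_t be the unique time-dependent vector field with (ω_t)_x(Y_t(x), ·) = −ζ_x. Then Y_t commutes with S for every t: DY_t(x)(Ax) = A·Y_t(x) for all x near 0. -/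

import Mathlib

set_option maxHeartbeats 1000000


open scoped Topology

/-- (Key computation in the proof of the equivariant Darboux lemma.) Let `ω`
be a smooth closed 2-form near `0` in `ℝ^{2n}`, `ω_c` the constant form `ω(0)`, `A` a real
matrix with linear vector field `S(x) = Ax` satisfying `L_S ω = ω` and `L_S ω_c = ω_c`. Define
`ζ = i_S (ω − ω_c)` and let `Y t` be the Moser path vector field: the unique solution of
`(ω_t)ₓ(Y_t(x), ·) = −ζₓ`, where `ω_t = tω + (1−t)ω_c` is nondegenerate for `t ∈ [0,1]`. Then
`Y_t` commutes with `S`: `DY_t(x)(Ax) = A·Y_t(x)`. -/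
theorem moser_field_commutes_with_linear_conformal
    (n : ℕ)
    (U : Set (Fin (n+n) → ℝ)) (hU : IsOpen U) (h0U : (0 : Fin (n+n) → ℝ) ∈ U)
    (ω : (Fin (n+n) → ℝ) → (Fin (n+n) → ℝ) →L[ℝ] (Fin (n+n) → ℝ) →L[ℝ] ℝ)
    (hωsmooth : ContDiffOn ℝ (⊤ : ℕ∞) ω U)
    (hωalt : ∀ x ∈ U, ∀ u, ω x u u = 0)
    -- ω is closed :
    (hclosed : ∀ x ∈ U, ∀ u v w : Fin (n+n) → ℝ,
      fderiv ℝ ω x u v w - fderiv ℝ ω x v u w + fderiv ℝ ω x w u v = 0)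
    (A : Matrix (Fin (n+n)) (Fin (n+n)) ℝ)
    -- L_S ω = ω :
    (hLS : ∀ x ∈ U, ∀ u v,
      fderiv ℝ ω x (A.mulVec x) u v + ω x (A.mulVec u) v + ω x u (A.mulVec v) = ω x u v)
    -- L_S ω_c = ω_c for the constant form ω_c = ω(0) :
    (hLSc : ∀ u v, ω 0 (A.mulVec u) v + ω 0 u (A.mulVec v) = ω 0 u v)
    -- each ω_t = tω + (1−t)ω_c is nondegenerate on U :
    (hndg : ∀ t ∈ Set.Icc (0:ℝ) 1, ∀ x ∈ U, ∀ u : Fin (n+n) → ℝ, u ≠ 0 →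
      ∃ v, t * ω x u v + (1 - t) * ω 0 u v ≠ 0)
    -- Y t is the Moser vector field : ω_t(Y_t(x), ·) = −ζ_x with ζ = i_S(ω − ω_c)
    (Y : ℝ → (Fin (n+n) → ℝ) → (Fin (n+n) → ℝ))
    (hY : ∀ t ∈ Set.Icc (0:ℝ) 1, ∀ x ∈ U, ∀ u,
      t * ω x (Y t x) u + (1 - t) * ω 0 (Y t x) u
        = -(ω x (A.mulVec x) u - ω 0 (A.mulVec x) u)) :
    ∀ t ∈ Set.Icc (0:ℝ) 1, ∀ x ∈ U,
      fderiv ℝ (Y t) x (A.mulVec x) = A.mulVec (Y t x) := by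
  intro t ht x hx
  classical
  -- the linear vector field as a continuous linear map
  set L : (Fin (n+n) → ℝ) →L[ℝ] (Fin (n+n) → ℝ) :=
    LinearMap.toContinuousLinearMap A.mulVecLin with hLdef
  have hLapp : ∀ v, L v = A.mulVec v := fun v => rfl
  -- the path of forms
  set B : (Fin (n+n) → ℝ) → (Fin (n+n) → ℝ) →L[ℝ] (Fin (n+n) → ℝ) →L[ℝ] ℝ :=
    fun y => t • ω y + (1 - t) • ω 0 with hBdef
  have hBapp : ∀ y u v, B y u v = t * ω y u v + (1 - t) * ω 0 u v := by
    intro y u v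
    simp [hBdef, ContinuousLinearMap.add_apply, ContinuousLinearMap.smul_apply, smul_eq_mul]
  have hBne : ∀ y ∈ U, ∀ u : Fin (n+n) → ℝ, u ≠ 0 → B y u ≠ 0 := by
    intro y hy u hu h
    obtain ⟨v, hv⟩ := hndg t ht y hy u hu
    apply hv
    rw [← hBapp, h, ContinuousLinearMap.zero_apply]
  have hBinj : ∀ y ∈ U, Function.Injective (B y) := by
    intro y hy u v huv
    by_contra hne
    exact hBne y hy (u - v) (sub_ne_zero.mpr hne) (by rw [map_sub, huv, sub_self])
  have hfr : Module.finrank ℝ (Fin (n+n) → ℝ) = Module.finrank ℝ ((Fin (n+n) → ℝ) →L[ℝ] ℝ) := by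
    rw [← LinearEquiv.finrank_eq
      (LinearMap.toContinuousLinearMap :
        ((Fin (n+n) → ℝ) →ₗ[ℝ] ℝ) ≃ₗ[ℝ] ((Fin (n+n) → ℝ) →L[ℝ] ℝ)),
      Module.finrank_linearMap, Module.finrank_self, mul_one]
  have hEquiv : ∀ y ∈ U, ∃ e : (Fin (n+n) → ℝ) ≃L[ℝ] ((Fin (n+n) → ℝ) →L[ℝ] ℝ),
      (e : (Fin (n+n) → ℝ) →L[ℝ] ((Fin (n+n) → ℝ) →L[ℝ] ℝ)) = B y := by
    intro y hy
    have hinj : Function.Injective ((B y).toLinearMap) := hBinj y hy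
    have hbij : Function.Bijective ((B y).toLinearMap) :=
      ⟨hinj, (LinearMap.injective_iff_surjective_of_finrank_eq_finrank hfr).mp hinj⟩
    refine ⟨LinearEquiv.toContinuousLinearEquiv (LinearEquiv.ofBijective _ hbij), ?_⟩
    ext u
    rfl
  -- the Moser field is given by inverting B
  have hYrep : ∀ y ∈ U,
      Y t y = (B y).inverse (-(ω y (A.mulVec y) - ω 0 (A.mulVec y))) := by
    intro y hy
    obtain ⟨e, he⟩ := hEquiv y hy
    have hBY : B y (Y t y) = -(ω y (A.mulVec y) - ω 0 (A.mulVec y)) := by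
      ext u
      have h6 := hY t ht y hy u
      rw [hBapp]
      simpa using h6
    apply hBinj y hy
    rw [hBY, ← he, ContinuousLinearMap.inverse_equiv]
    simp
  -- differentiability data
  have h1le : (1 : WithTop ℕ∞) ≤ ((⊤ : ℕ∞) : WithTop ℕ∞) := by exact_mod_cast le_top
  have hωx : ContDiffAt ℝ (⊤ : ℕ∞) ω x := hωsmooth.contDiffAt (hU.mem_nhds hx)
  have hωdiff : DifferentiableAt ℝ ω x := hωx.differentiableAt (ne_of_gt (lt_of_lt_of_le zero_lt_one h1le))
  have hBsm : ContDiffAt ℝ (⊤ : ℕ∞) B x := (hωx.const_smul t).add contDiffAt_const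
  have hBdiff : DifferentiableAt ℝ B x := hBsm.differentiableAt (ne_of_gt (lt_of_lt_of_le zero_lt_one h1le))
  have hmul : ContDiffAt ℝ (⊤ : ℕ∞) (fun y : Fin (n+n) → ℝ => A.mulVec y) x :=
    L.contDiff.contDiffAt
  have hmd : DifferentiableAt ℝ (fun y : Fin (n+n) → ℝ => A.mulVec y) x :=
    hmul.differentiableAt (ne_of_gt (lt_of_lt_of_le zero_lt_one h1le))
  obtain ⟨ex, hex⟩ := hEquiv x hx
  have hinvsm : ContDiffAt ℝ (⊤ : ℕ∞) (fun y => (B y).inverse) x := by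
    have h1 : ContDiffAt ℝ (⊤ : ℕ∞) ContinuousLinearMap.inverse (B x) := by
      rw [← hex]; exact contDiffAt_map_inverse ex
    exact h1.comp x hBsm
  have hζsm : ContDiffAt ℝ (⊤ : ℕ∞)
      (fun y => -(ω y (A.mulVec y) - ω 0 (A.mulVec y))) x := by
    have h1 : ContDiffAt ℝ (⊤ : ℕ∞) (fun y => ω y (A.mulVec y)) x := hωx.clm_apply hmul
    have h2 : ContDiffAt ℝ (⊤ : ℕ∞) (fun y => ω 0 (A.mulVec y)) x :=
      ((ω 0).comp L).contDiff.contDiffAt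
    exact (h1.sub h2).neg
  have hg : DifferentiableAt ℝ
      (fun y => (B y).inverse (-(ω y (A.mulVec y) - ω 0 (A.mulVec y)))) x :=
    (hinvsm.clm_apply hζsm).differentiableAt (ne_of_gt (lt_of_lt_of_le zero_lt_one h1le))
  have hEvEq : Y t =ᶠ[𝓝 x]
      fun y => (B y).inverse (-(ω y (A.mulVec y) - ω 0 (A.mulVec y))) :=
    Filter.eventuallyEq_of_mem (hU.mem_nhds hx) (fun y hy => hYrep y hy)
  have hYdiff : DifferentiableAt ℝ (Y t) x := hEvEq.differentiableAt_iff.mpr hg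
  -- the derivative of B
  have hfB : fderiv ℝ B x = t • fderiv ℝ ω x := by
    rw [hBdef]; exact ((hωdiff.hasFDerivAt.const_smul (𝕜 := ℝ) (E := Fin (n+n) → ℝ) t).add_const ((1 - t) • ω 0)).fderiv
  -- differentiate the Moser equation
  have hEvEq2 : (fun y => B y (Y t y)) =ᶠ[𝓝 x]
      (fun y => -(ω y (A.mulVec y) - ω 0 (A.mulVec y))) := by
    filter_upwards [hU.mem_nhds hx] with y hy
    ext u
    have h6 := hY t ht y hy u
    rw [hBapp]
    simpa using h6
  have hfL : fderiv ℝ (fun y : Fin (n+n) → ℝ => A.mulVec y) x = L := L.fderiv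
  have hω1 : fderiv ℝ (fun y => ω y (A.mulVec y)) x =
      (ω x).comp L + (fderiv ℝ ω x).flip (A.mulVec x) := by
    rw [fderiv_clm_apply hωdiff hmd, hfL]
  have hω2 : fderiv ℝ (fun y => ω 0 (A.mulVec y)) x = (ω 0).comp L :=
    ((ω 0).comp L).fderiv
  have hd1 : DifferentiableAt ℝ (fun y => ω y (A.mulVec y)) x := hωdiff.clm_apply hmd
  have hd2 : DifferentiableAt ℝ (fun y => ω 0 (A.mulVec y)) x :=
    ((ω 0).comp L).differentiableAt
  have hfd : (B x).comp (fderiv ℝ (Y t) x) + (fderiv ℝ B x).flip (Y t x)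
      = -(((ω x).comp L + (fderiv ℝ ω x).flip (A.mulVec x)) - (ω 0).comp L) := by
    rw [← fderiv_clm_apply hBdiff hYdiff, ← hω1, ← hω2, ← fderiv_sub hd1 hd2, ← fderiv_neg]
    exact hEvEq2.fderiv_eq
  have key : ∀ u, B x (fderiv ℝ (Y t) x (A.mulVec x)) u
        + t * fderiv ℝ ω x (A.mulVec x) (Y t x) u
      = -((ω x (A.mulVec (A.mulVec x)) u + fderiv ℝ ω x (A.mulVec x) (A.mulVec x) u)
          - ω 0 (A.mulVec (A.mulVec x)) u) := by
    intro u
    have h4 := DFunLike.congr_fun hfd (A.mulVec x)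
    have h5 := DFunLike.congr_fun h4 u
    simp only [ContinuousLinearMap.add_apply, ContinuousLinearMap.comp_apply,
      ContinuousLinearMap.flip_apply, ContinuousLinearMap.neg_apply,
      ContinuousLinearMap.sub_apply, hfB, ContinuousLinearMap.smul_apply,
      smul_eq_mul, hLapp] at h5
    linarith [h5]
  -- conclude by nondegeneracy
  have hZ : B x (fderiv ℝ (Y t) x (A.mulVec x) - A.mulVec (Y t x)) = 0 := by
    ext u
    rw [map_sub, ContinuousLinearMap.sub_apply, ContinuousLinearMap.zero_apply]
    have E1 := key u
    have E2 := hLS x hx (Y t x) u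
    have E3 := hLSc (Y t x) u
    have E4 := hLS x hx (A.mulVec x) u
    have E5 := hLSc (A.mulVec x) u
    have E6 := hY t ht x hx u
    have E7 := hY t ht x hx (A.mulVec u)
    rw [hBapp] at E1 ⊢
    rw [hBapp]
    linear_combination E1 - t*E2 - (1-t)*E3 - E4 + E5 - E6 + E7
  have hz : fderiv ℝ (Y t) x (A.mulVec x) - A.mulVec (Y t x) = 0 := by
    by_contra h
    exact hBne x hx _ h hZ
  exact sub_eq_zero.mp hz
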